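/- Let (X_r) be any sequence with X_r = ±1, Δx > 0, a ∈ ℝ, and S_0 = a, S_n = a + (X_1 + ... + X_n)Δx. Define one-sided discrete local times L^±(n, x) := Δx · #{ j : 0 ≤ j < n, S_j = x, S_{j+1} = x ± Δx } for x ∈ a + ℤΔx. Then for any f : ℝ → ℝ and n ≥ 1, T_{x=S_0}^{S_n} f(x)Δx = Σ_{r=1}^{n} f(S_{r-1}) X_r Δx + (1/2) Σ_{x ∈ a+ℤΔx} [ L^+(n,x)(f(x+Δx) − f(x)) + L^−(n,x)(f(x) − f(x−Δx)) ] (discrete Itô–Tanaka formula). The sum over x has only finitely many nonzero terms. -/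
import Mathlib

open scoped Classical
open Finset

noncomputable section

/-- Partial sums `S_n = a + (X_1 + ... + X_n) Δx` of a `±1` sequence. -/
def walk (a dx : ℝ) (X : ℕ → ℤ) (n : ℕ) : ℝ :=
  a + ((∑ i ∈ Finset.range n, X i : ℤ) : ℝ) * dx

/-- Trapezoidal sum `T_{x=a}^{a + k Δx} f(x) Δx`. -/
def trapSum (f : ℝ → ℝ) (a dx : ℝ) (k : ℤ) : ℝ :=
  (k.sign : ℝ) * dx *
    (f a / 2 +
      (∑ j ∈ Finset.range (k.natAbs - 1), f (a + (k.sign : ℝ) * ((j : ℝ) + 1) * dx)) +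
      f (a + (k : ℝ) * dx) / 2)

/-- One-sided (up) discrete local time `L^+(n,x)`. -/
def locPlus (a dx : ℝ) (X : ℕ → ℤ) (n : ℕ) (x : ℝ) : ℝ :=
  dx * ((Finset.range n).filter
    (fun j => walk a dx X j = x ∧ walk a dx X (j + 1) = x + dx)).card

/-- One-sided (down) discrete local time `L^-(n,x)`. -/
def locMinus (a dx : ℝ) (X : ℕ → ℤ) (n : ℕ) (x : ℝ) : ℝ :=
  dx * ((Finset.range n).filter
    (fun j => walk a dx X j = x ∧ walk a dx X (j + 1) = x - dx)).card

lemma trap_step (f : ℝ → ℝ) (a dx : ℝ) (k : ℤ) :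
    trapSum f a dx (k + 1) =
      trapSum f a dx k + dx * (f (a + (k : ℝ) * dx) + f (a + ((k : ℝ) + 1) * dx)) / 2 := by
  rcases le_or_gt 0 k with hk | hk
  · obtain ⟨m, rfl⟩ := Int.eq_ofNat_of_zero_le hk
    cases m with
    | zero => simp [trapSum]; ring
    | succ m =>
      have e : ((m + 1 : ℕ) : ℤ) = (m : ℤ) + 1 := by push_cast; ring
      rw [e]
      have h1 : ((m : ℤ) + 1).sign = 1 := Int.sign_eq_one_of_pos (by positivity)
      have h2 : ((m : ℤ) + 1 + 1).sign = 1 := Int.sign_eq_one_of_pos (by positivity)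
      have h3 : ((m : ℤ) + 1).natAbs = m + 1 := by omega
      have h4 : ((m : ℤ) + 1 + 1).natAbs = m + 2 := by omega
      simp only [trapSum, h1, h2, h3, h4, Nat.add_sub_cancel]
      rw [show m + 2 - 1 = m + 1 by omega, Finset.sum_range_succ]
      push_cast
      rw [show a + 1*((m:ℝ)+1)*dx = a + ((m:ℝ)+1)*dx by ring]
      ring
  · obtain ⟨m, rfl⟩ : ∃ m : ℕ, k = -((m : ℤ) + 1) := ⟨(-k - 1).toNat, by omega⟩
    cases m with
    | zero => simp [trapSum]; ring_nf
    | succ m =>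
      have e : -(((m + 1 : ℕ) : ℤ) + 1) = -((m : ℤ) + 1 + 1) := by push_cast; ring
      rw [e]
      have h1 : (-((m : ℤ) + 1 + 1)).sign = -1 := Int.sign_eq_neg_one_of_neg (by omega)
      have h2 : (-((m : ℤ) + 1 + 1) + 1).sign = -1 := Int.sign_eq_neg_one_of_neg (by omega)
      have h3 : (-((m : ℤ) + 1 + 1)).natAbs = m + 2 := by omega
      have h4 : (-((m : ℤ) + 1 + 1) + 1).natAbs = m + 1 := by omega
      simp only [trapSum, h1, h2, h3, h4]
      rw [show m + 2 - 1 = m + 1 by omega, Nat.add_sub_cancel, Finset.sum_range_succ]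
      push_cast
      rw [show a + -1*((m:ℝ)+1)*dx = a + (-((m:ℝ)+1+1)+1)*dx by ring]
      ring

/-- The summand in the local-time sum. -/
def gfun (f : ℝ → ℝ) (a dx : ℝ) (X : ℕ → ℤ) (n : ℕ) (k : ℤ) : ℝ :=
  locPlus a dx X n (a + (k : ℝ) * dx) *
      (f (a + (k : ℝ) * dx + dx) - f (a + (k : ℝ) * dx)) +
    locMinus a dx X n (a + (k : ℝ) * dx) *
      (f (a + (k : ℝ) * dx) - f (a + (k : ℝ) * dx - dx))

lemma walk_eq_iff {a dx : ℝ} (hdx : dx ≠ 0) (X : ℕ → ℤ) (j : ℕ) (k : ℤ) :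
    walk a dx X j = a + (k : ℝ) * dx ↔ (∑ i ∈ Finset.range j, X i) = k := by
  unfold walk
  constructor
  · intro h
    have h2 : ((∑ i ∈ Finset.range j, X i : ℤ) : ℝ) = (k : ℝ) :=
      mul_right_cancel₀ hdx (by linarith)
    exact_mod_cast h2
  · intro h; rw [h]

lemma gfun_eq_zero {f : ℝ → ℝ} {a dx : ℝ} (hdx : dx ≠ 0) (X : ℕ → ℤ) (n : ℕ) (k : ℤ)
    (hk : ∀ j ∈ Finset.range n, (∑ i ∈ Finset.range j, X i) ≠ k) :
    gfun f a dx X n k = 0 := by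
  unfold gfun locPlus locMinus
  rw [Finset.filter_false_of_mem
      (fun j hj hcond => hk j hj ((walk_eq_iff hdx X j k).1 hcond.1)),
      Finset.filter_false_of_mem
      (fun j hj hcond => hk j hj ((walk_eq_iff hdx X j k).1 hcond.1))]
  simp

lemma gfun_summable {f : ℝ → ℝ} {a dx : ℝ} (hdx : dx ≠ 0) (X : ℕ → ℤ) (n : ℕ) :
    Summable (gfun f a dx X n) := by
  refine summable_of_ne_finset_zero
    (s := (Finset.range n).image (fun j => ∑ i ∈ Finset.range j, X i)) (fun k hk => ?_)
  refine gfun_eq_zero hdx X n k (fun j hj hjk => ?_)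
  exact hk (Finset.mem_image.2 ⟨j, hj, hjk⟩)

lemma loc_succ (a dx : ℝ) (X : ℕ → ℤ) (n : ℕ) (x y : ℝ) :
    dx * (((Finset.range (n+1)).filter
      (fun j => walk a dx X j = x ∧ walk a dx X (j + 1) = y)).card : ℝ) =
    dx * (((Finset.range n).filter
      (fun j => walk a dx X j = x ∧ walk a dx X (j + 1) = y)).card : ℝ) +
    (if walk a dx X n = x ∧ walk a dx X (n + 1) = y then dx else 0) := by
  rw [Finset.range_add_one, Finset.filter_insert]
  split_ifs with h
  · rw [Finset.card_insert_of_notMem (by simp)]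
    push_cast; ring
  · simp

lemma walk_succ (a dx : ℝ) (X : ℕ → ℤ) (n : ℕ) :
    walk a dx X (n + 1) = walk a dx X n + (X n : ℝ) * dx := by
  unfold walk
  rw [Finset.sum_range_succ]
  push_cast; ring

lemma gfun_succ {f : ℝ → ℝ} {a dx : ℝ} (hdx : 0 < dx) {X : ℕ → ℤ}
    (hX : ∀ r, X r = 1 ∨ X r = -1) (n : ℕ) (k : ℤ) :
    gfun f a dx X (n+1) k = gfun f a dx X n k +
      (if (∑ i ∈ Finset.range n, X i) = k then
        (if X n = 1 then dx * (f (a + (k:ℝ)*dx + dx) - f (a + (k:ℝ)*dx))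
          else dx * (f (a + (k:ℝ)*dx) - f (a + (k:ℝ)*dx - dx)))
       else 0) := by
  have hdx' : dx ≠ 0 := hdx.ne'
  unfold gfun locPlus locMinus
  rw [loc_succ a dx X n _ (a + (k : ℝ) * dx + dx),
      loc_succ a dx X n _ (a + (k : ℝ) * dx - dx)]
  have hws := walk_succ a dx X n
  by_cases hw : walk a dx X n = a + (k : ℝ) * dx
  · rw [if_pos ((walk_eq_iff hdx' X n k).1 hw)]
    rcases hX n with h1 | h1
    · rw [if_pos (show X n = 1 from h1)]
      rw [if_pos (show walk a dx X n = a + (k : ℝ) * dx ∧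
            walk a dx X (n + 1) = a + (k : ℝ) * dx + dx from
            ⟨hw, by rw [hws, hw, h1]; push_cast; ring⟩),
          if_neg (show ¬(walk a dx X n = a + (k : ℝ) * dx ∧
            walk a dx X (n + 1) = a + (k : ℝ) * dx - dx) from by
            rintro ⟨-, hc⟩; rw [hws, hw, h1] at hc; push_cast at hc; linarith)]
      ring
    · rw [if_neg (show ¬(X n = 1) from by rw [h1]; norm_num)]
      rw [if_neg (show ¬(walk a dx X n = a + (k : ℝ) * dx ∧
            walk a dx X (n + 1) = a + (k : ℝ) * dx + dx) from by
            rintro ⟨-, hc⟩; rw [hws, hw, h1] at hc; push_cast at hc; linarith),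
          if_pos (show walk a dx X n = a + (k : ℝ) * dx ∧
            walk a dx X (n + 1) = a + (k : ℝ) * dx - dx from
            ⟨hw, by rw [hws, hw, h1]; push_cast; ring⟩)]
      ring
  · rw [if_neg (fun h => hw ((walk_eq_iff hdx' X n k).2 h))]
    rw [if_neg (show ¬(walk a dx X n = a + (k : ℝ) * dx ∧
          walk a dx X (n + 1) = a + (k : ℝ) * dx + dx) from fun h => hw h.1),
        if_neg (show ¬(walk a dx X n = a + (k : ℝ) * dx ∧
          walk a dx X (n + 1) = a + (k : ℝ) * dx - dx) from fun h => hw h.1)]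
    ring

lemma tsum_gfun_succ {f : ℝ → ℝ} {a dx : ℝ} (hdx : 0 < dx) {X : ℕ → ℤ}
    (hX : ∀ r, X r = 1 ∨ X r = -1) (n : ℕ) :
    ∑' k : ℤ, gfun f a dx X (n+1) k = (∑' k : ℤ, gfun f a dx X n k) +
      (if X n = 1 then dx * (f (walk a dx X n + dx) - f (walk a dx X n))
        else dx * (f (walk a dx X n) - f (walk a dx X n - dx))) := by
  set k₀ := ∑ i ∈ Finset.range n, X i with hk₀
  have hdx' : dx ≠ 0 := hdx.ne'
  have hh : ∀ k : ℤ, gfun f a dx X (n+1) k = gfun f a dx X n k +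
      (fun k => (if k₀ = k then
        (if X n = 1 then dx * (f (a + (k:ℝ)*dx + dx) - f (a + (k:ℝ)*dx))
          else dx * (f (a + (k:ℝ)*dx) - f (a + (k:ℝ)*dx - dx)))
       else 0)) k := fun k => gfun_succ hdx hX n k
  rw [tsum_congr hh]
  rw [Summable.tsum_add (gfun_summable hdx' X n)
    (summable_of_ne_finset_zero (s := {k₀}) (fun k hk => by
      simp only [Finset.mem_singleton] at hk
      exact if_neg (fun h => hk h.symm)))]
  congr 1
  rw [tsum_eq_single k₀ (fun k hk => if_neg (fun h => hk h.symm))]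
  rw [if_pos rfl]
  have : walk a dx X n = a + (k₀ : ℝ) * dx := rfl
  rw [this]

lemma main_aux (f : ℝ → ℝ) (a dx : ℝ) (hdx : 0 < dx)
    (X : ℕ → ℤ) (hX : ∀ r, X r = 1 ∨ X r = -1) (n : ℕ) :
    trapSum f a dx (∑ i ∈ Finset.range n, X i) =
      (∑ r ∈ Finset.range n, f (walk a dx X r) * ((X r : ℝ) * dx)) +
      (1 / 2) * ∑' k : ℤ, gfun f a dx X n k := by
  induction n with
  | zero =>
    have h0 : ∀ k : ℤ, gfun f a dx X 0 k = 0 := fun k =>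
      gfun_eq_zero hdx.ne' X 0 k (by simp)
    rw [tsum_congr h0]
    simp [trapSum, tsum_zero]
  | succ n ih =>
    rw [Finset.sum_range_succ, Finset.sum_range_succ, tsum_gfun_succ hdx hX n]
    set P := ∑ i ∈ Finset.range n, X i with hP
    have hwn : walk a dx X n = a + (P : ℝ) * dx := rfl
    rcases hX n with h1 | h1
    · rw [h1, trap_step f a dx P, ih, hwn]
      rw [if_pos rfl]
      rw [show a + ((P:ℝ) + 1) * dx = a + (P:ℝ)*dx + dx by ring]
      push_cast
      ring
    · rw [h1]
      have ht := trap_step f a dx (P - 1)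
      rw [sub_add_cancel] at ht
      push_cast at ht
      rw [show ((P : ℤ) + -1) = P - 1 by ring, eq_sub_of_add_eq ht.symm, ih]
      rw [if_neg (by norm_num), hwn]
      rw [show a + ((P:ℝ) - 1) * dx = a + (P:ℝ)*dx - dx by ring,
          show a + ((P:ℝ) - 1 + 1) * dx = a + (P:ℝ)*dx by ring]
      push_cast
      ring

/-- Discrete Itô–Tanaka formula; the sum over the lattice `a + ℤ Δx` has only
finitely many nonzero terms. -/
theorem discrete_ito_tanaka (f : ℝ → ℝ) (a dx : ℝ) (hdx : 0 < dx)
    (X : ℕ → ℤ) (hX : ∀ r, X r = 1 ∨ X r = -1) (n : ℕ) (hn : 1 ≤ n) :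
    {k : ℤ | locPlus a dx X n (a + (k : ℝ) * dx) ≠ 0 ∨
        locMinus a dx X n (a + (k : ℝ) * dx) ≠ 0}.Finite ∧
    trapSum f a dx (∑ i ∈ Finset.range n, X i) =
      (∑ r ∈ Finset.range n, f (walk a dx X r) * ((X r : ℝ) * dx)) +
      (1 / 2) * ∑' k : ℤ,
        (locPlus a dx X n (a + (k : ℝ) * dx) *
            (f (a + (k : ℝ) * dx + dx) - f (a + (k : ℝ) * dx)) +
         locMinus a dx X n (a + (k : ℝ) * dx) *
            (f (a + (k : ℝ) * dx) - f (a + (k : ℝ) * dx - dx))) := by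
  constructor
  · refine Set.Finite.subset
      (Finset.finite_toSet ((Finset.range n).image (fun j => ∑ i ∈ Finset.range j, X i)))
      (fun k hk => ?_)
    simp only [Set.mem_setOf_eq] at hk
    by_contra hc
    simp only [Finset.coe_image, Set.mem_image, Finset.mem_coe] at hc
    have hz : gfun f a dx X n k = 0 := by
      refine gfun_eq_zero hdx.ne' X n k (fun j hj hjk => ?_)
      exact hc ⟨j, hj, hjk⟩
    have hp : locPlus a dx X n (a + (k : ℝ) * dx) = 0 := by
      unfold locPlus
      have : (Finset.range n).filter
          (fun j => walk a dx X j = a + (k : ℝ) * dx ∧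
            walk a dx X (j + 1) = a + (k : ℝ) * dx + dx) = ∅ := by
        refine Finset.filter_false_of_mem (fun j hj hcond => ?_)
        exact hc ⟨j, hj, (walk_eq_iff hdx.ne' X j k).1 hcond.1⟩
      rw [this]; simp
    have hm : locMinus a dx X n (a + (k : ℝ) * dx) = 0 := by
      unfold locMinus
      have : (Finset.range n).filter
          (fun j => walk a dx X j = a + (k : ℝ) * dx ∧
            walk a dx X (j + 1) = a + (k : ℝ) * dx - dx) = ∅ := by
        refine Finset.filter_false_of_mem (fun j hj hcond => ?_)
        exact hc ⟨j, hj, (walk_eq_iff hdx.ne' X j k).1 hcond.1⟩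
      rw [this]; simp
    tauto
  · exact main_aux f a dx hdx X hX n
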